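/- Every word w ∈ L₂(u) occurs in u_{[i, i+G)} for every i ∈ ℤ₊, where G = ⌈2C·(max_{a∈A}|σ(a)|)·λ^{n₀}⌉ and n₀ = (#A)⁴ − 2(#A)² + 2. In particular, the constant g is at most G. -/

import Mathlib

open List Filter

section Defs

variable {A : Type*}

/-- The segment `u_[i,j)` of the sequence `u`. -/
def seg (u : ℕ → A) (i j : ℕ) : List A :=
  (List.range (j - i)).map fun k => u (i + k)

/-- A substitution applied to a word, letter by letter. -/
def substWord (σ : A → List A) (w : List A) : List A := w.flatMap σ

/-- `σ^p` applied to a word. -/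
def substPow (σ : A → List A) (p : ℕ) (w : List A) : List A := (substWord σ)^[p] w

/-- A substitution is primitive if some power of it sends every letter to a word
containing every letter. -/
def IsPrimitiveSubst (σ : A → List A) : Prop :=
  ∃ k : ℕ, ∀ a b : A, a ∈ substPow σ k [b]

/-- `u` is a fixed point of `σ`: the image of every prefix of `u` is again a prefix of `u`. -/
def IsFixedPoint (σ : A → List A) (u : ℕ → A) : Prop :=
  ∀ m : ℕ, substWord σ (seg u 0 m) = seg u 0 (substWord σ (seg u 0 m)).length

/-- `u` is aperiodic under the left shift: `T^i u ≠ u` for all `i ≥ 1`. -/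
def AperiodicSeq (u : ℕ → A) : Prop := ∀ i : ℕ, 1 ≤ i → (fun n => u (n + i)) ≠ u

/-- The set `E_p` of natural `p`-cutting points. -/
def cutPoints (σ : A → List A) (u : ℕ → A) (p : ℕ) : Set ℕ :=
  { m | ∃ n : ℕ, m = (substPow σ p (seg u 0 n)).length }

/-- Unilateral recognizability of `σ` (with fixed point `u`). -/
def UnilaterallyRecognizable (σ : A → List A) (u : ℕ → A) : Prop :=
  ∃ L : ℕ, 1 ≤ L ∧ ∀ i j : ℕ,
    seg u i (i + L) = seg u j (j + L) → i ∈ cutPoints σ u 1 → j ∈ cutPoints σ u 1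

/-- `L_n(u)`: the set of factors of `u` of length `n`. -/
def factors (u : ℕ → A) (n : ℕ) : Set (List A) := { w | ∃ i : ℕ, w = seg u i (i + n) }

/-- `L(u)`: the language of `u` (including the empty word). -/
def lang (u : ℕ → A) : Set (List A) := { w | ∃ i n : ℕ, w = seg u i (i + n) }

/-- `w^n`: the concatenation of `n` copies of `w`. -/
def wpow (w : List A) (n : ℕ) : List A := (List.replicate n w).flatten

/-- A nonempty word `v` is primitive if `v = w^n` with `w` nonempty forces `w = v`. -/
def PrimitiveWord (v : List A) : Prop :=
  ∀ w : List A, w ≠ [] → ∀ n : ℕ, 1 ≤ n → v = wpow w n → w = v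

/-- `g` is a gap of occurrences of `w` in `u` if every interval of length `g` in `ℤ₊`
contains an occurrence of `w`. -/
def IsGap (u : ℕ → A) (w : List A) (g : ℕ) : Prop := ∀ i : ℕ, w <:+: seg u i (i + g)

/-- The minimal gap of a word. -/
noncomputable def minGap (u : ℕ → A) (w : List A) : ℕ := sInf { g | IsGap u w g }

/-- `g`: the maximum over `w ∈ L₂(u)` of the minimal gap of `w`. -/
noncomputable def gapConst (u : ℕ → A) : ℕ :=
  sSup { m | ∃ w ∈ factors u 2, m = minGap u w }

/-- A natural `p`-cutting `{α, σ^p(u_{i'}), …, σ^p(u_{i'+k-1}), β}` of `u_[i,i+ℓ)`. -/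
def IsNaturalCutting (σ : A → List A) (u : ℕ → A) (p i ℓ : ℕ)
    (α : List A) (i' k : ℕ) (β : List A) : Prop :=
  1 ≤ k ∧
  α <:+ substPow σ p [u (i' - 1)] ∧
  β <+: substPow σ p [u (i' + k)] ∧
  seg u i (i + ℓ) = α ++ substPow σ p (seg u i' (i' + k)) ++ β ∧
  i + α.length = (substPow σ p (seg u 0 i')).length

section Fin

variable [Fintype A] [Nonempty A] [DecidableEq A]

/-- The incidence matrix of a substitution: the `(a,b)` entry is `|σ(a)|_b`. -/
def incMatrix (σ : A → List A) : Matrix A A ℕ := Matrix.of fun a b => (σ a).count b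

/-- The incidence matrix as a real matrix. -/
noncomputable def incMatrixR (σ : A → List A) : Matrix A A ℝ :=
  Matrix.of fun a b => ((σ a).count b : ℝ)

/-- `S_p = max_{a ∈ A} |σ^p(a)|`. -/
def Sp (σ : A → List A) (p : ℕ) : ℕ :=
  Finset.univ.sup' Finset.univ_nonempty fun a => (substPow σ p [a]).length

/-- `I_p = min_{a ∈ A} |σ^p(a)|`. -/
def Ip (σ : A → List A) (p : ℕ) : ℕ :=
  Finset.univ.inf' Finset.univ_nonempty fun a => (substPow σ p [a]).length

/-- `C = ⌈(max_b β_b)/(min_b β_b)⌉` for a positive eigenvector `β`. -/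
noncomputable def Cst (β : A → ℝ) : ℕ :=
  ⌈(Finset.univ.sup' Finset.univ_nonempty β) / (Finset.univ.inf' Finset.univ_nonempty β)⌉₊

/-- `K = ⌈λ C² max{2(g+1), (#A)²}⌉`. -/
noncomputable def Kst (u : ℕ → A) (lam : ℝ) (β : A → ℝ) : ℕ :=
  ⌈lam * (Cst β : ℝ) ^ 2 *
    max (2 * ((gapConst u : ℝ) + 1)) ((Fintype.card A : ℝ) ^ 2)⌉₊

/-- The constant `p₀` of Lemma 4.2. -/
noncomputable def p0 (u : ℕ → A) (lam : ℝ) (β : A → ℝ) : ℕ :=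
  (Kst u lam β) ^ 2 * ((Cst β) ^ 4 * (Kst u lam β + 1) + 2 * (Cst β) ^ 2 + 1) *
    (∑ n ∈ Finset.Icc ((Cst β) ^ 2 * (Kst u lam β + 1) + 2)
        ((Kst u lam β + 1) * (Cst β) ^ 6 + 2 * (Cst β) ^ 4 + (Cst β) ^ 2 + 2), n) + 1

/-- The constant `L₀ = (C⁴(K+1)+2C²+1) S_{p₀}`. -/
noncomputable def L0 (σ : A → List A) (u : ℕ → A) (lam : ℝ) (β : A → ℝ) : ℕ :=
  ((Cst β) ^ 4 * (Kst u lam β + 1) + 2 * (Cst β) ^ 2 + 1) * Sp σ (p0 u lam β)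

/-- The ℓ¹ norm of a vector. -/
def l1norm (f : A → ℝ) : ℝ := ∑ a, |f a|

/-- The projective metric on positive row vectors. -/
noncomputable def projMetric (x y : A → ℝ) : ℝ :=
  Real.log ((Finset.univ.sup' Finset.univ_nonempty fun a => x a / y a) /
    (Finset.univ.inf' Finset.univ_nonempty fun a => x a / y a))

/-- The Birkhoff contraction coefficient of a matrix. -/
noncomputable def birkhoff (M : Matrix A A ℝ) : ℝ :=
  sSup { r | ∃ x y : A → ℝ, (∀ a, 0 < x a) ∧ (∀ a, 0 < y a) ∧
    LinearIndependent ℝ ![x, y] ∧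
    r = projMetric (Matrix.vecMul x M) (Matrix.vecMul y M) / projMetric x y }

end Fin

/-- Membership in the vertex set `V^*`: pairs `(xac, ybc)` of factors of `u` of length
`N + L₁ + 1` with `a ≠ b` and `|c| = L₁`. -/
def memVstar (u : ℕ → A) (N L₁ : ℕ) (p : List A × List A) : Prop :=
  ∃ (x y c : List A) (a b : A), a ≠ b ∧
    x.length = N ∧ y.length = N ∧ c.length = L₁ ∧
    p.1 = x ++ a :: c ∧ p.2 = y ++ b :: c ∧
    p.1 ∈ factors u (N + L₁ + 1) ∧ p.2 ∈ factors u (N + L₁ + 1)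

/-- An edge between representatives: there is a word `w` with `s'w` a suffix of `σ(s)` and
`t'w` a suffix of `σ(t)`. -/
def edgeRep (σ : A → List A) (p q : List A × List A) : Prop :=
  ∃ w : List A, w ≠ [] ∧ (q.1 ++ w) <:+ substWord σ p.1 ∧ (q.2 ++ w) <:+ substWord σ p.2

/-- An edge in the graph `G` between the unordered pairs represented by `p` and `q`. -/
def graphEdge (σ : A → List A) (p q : List A × List A) : Prop :=
  edgeRep σ p q ∨ edgeRep σ p q.swap ∨ edgeRep σ p.swap q ∨ edgeRep σ p.swap q.swap

/-- A representative generates a gap of natural 1-cutting points. -/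
def genGapRep (σ : A → List A) (p : List A × List A) : Prop :=
  ∃ (α β : A) (γ δ : List A),
    (σ α <:+ σ β ∧ σ α ≠ σ β) ∧
    List.Forall₂ (fun s t => σ s = σ t) γ δ ∧
    (α :: γ) <:+ substWord σ p.1 ∧ (β :: δ) <:+ substWord σ p.2

/-- The unordered pair represented by `p` generates a gap of natural 1-cutting points. -/
def genGap (σ : A → List A) (p : List A × List A) : Prop :=
  genGapRep σ p ∨ genGapRep σ p.swap

/-- The list of consecutive two-letter blocks of a word. -/
def pairsList (l : List A) : List (List A) :=
  List.zipWith (fun a b => [a, b]) l l.tail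

end Defs

section Lemmas
open List
variable {A : Type*}

lemma seg_length (u : ℕ → A) (i j : ℕ) : (seg u i j).length = j - i := by
  simp [seg]

lemma seg_getElem (u : ℕ → A) (i j r : ℕ) (h : r < (seg u i j).length) :
    (seg u i j)[r] = u (i + r) := by
  simp [seg]

lemma seg_append (u : ℕ → A) {i j k : ℕ} (h1 : i ≤ j) (h2 : j ≤ k) :
    seg u i k = seg u i j ++ seg u j k := by
  have h3 : k - i = (j - i) + (k - j) := by omega
  rw [seg, h3, List.range_add, List.map_append, List.map_map]
  congr 1
  unfold seg
  apply List.map_congr_left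
  intro r _
  simp only [Function.comp_apply]
  congr 1
  omega

lemma seg_succ (u : ℕ → A) (n : ℕ) : seg u 0 (n + 1) = seg u 0 n ++ [u n] := by
  rw [seg_append u (Nat.zero_le n) (Nat.le_succ n)]
  congr 1
  simp [seg, List.range_succ]

lemma seg_two (u : ℕ → A) (m : ℕ) : seg u m (m + 2) = [u m, u (m + 1)] := by
  simp [seg, List.range_succ]

end Lemmas
section Lemmas2
open List
variable {A : Type*}

lemma substWord_append (σ : A → List A) (l₁ l₂ : List A) :
    substWord σ (l₁ ++ l₂) = substWord σ l₁ ++ substWord σ l₂ := by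
  simp [substWord]

lemma substPow_append (σ : A → List A) (p : ℕ) (l₁ l₂ : List A) :
    substPow σ p (l₁ ++ l₂) = substPow σ p l₁ ++ substPow σ p l₂ := by
  induction p with
  | zero => simp [substPow]
  | succ n ih =>
      simp only [substPow, Function.iterate_succ_apply'] at *
      rw [ih, substWord_append]

lemma substPow_cons (σ : A → List A) (p : ℕ) (a : A) (l : List A) :
    substPow σ p (a :: l) = substPow σ p [a] ++ substPow σ p l := by
  simpa using substPow_append σ p [a] l

lemma substPow_singleton_succ (σ : A → List A) (p : ℕ) (a : A) :
    substPow σ (p + 1) [a] = substPow σ p (σ a) := by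
  have : substWord σ [a] = σ a := by simp [substWord]
  rw [substPow, Function.iterate_succ_apply, this]
  rfl

lemma one_le_substPow_len (σ : A → List A) (hσne : ∀ a, σ a ≠ []) (p : ℕ) :
    ∀ a : A, 1 ≤ (substPow σ p [a]).length := by
  induction p with
  | zero => intro a; simp [substPow]
  | succ n ih =>
      intro a
      rw [substPow_singleton_succ]
      obtain ⟨b, l, hl⟩ := List.exists_cons_of_ne_nil (hσne a)
      rw [hl, substPow_cons, List.length_append]
      have := ih b
      omega

lemma substPow_add (σ : A → List A) (s t : ℕ) (w : List A) :
    substPow σ (s + t) w = substPow σ s (substPow σ t w) := by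
  simp [substPow, Function.iterate_add_apply]

end Lemmas2
section Lemmas3
open List
variable {A : Type*}

/-- The `t`-cutting point sequence. -/
def cutFn (σ : A → List A) (u : ℕ → A) (t n : ℕ) : ℕ :=
  (substPow σ t (seg u 0 n)).length

lemma substPow_seg (σ : A → List A) (u : ℕ → A) (hfix : IsFixedPoint σ u) (t n : ℕ) :
    substPow σ t (seg u 0 n) = seg u 0 (cutFn σ u t n) := by
  induction t with
  | zero =>
      have h0 : cutFn σ u 0 n = n := by simp [cutFn, substPow, seg_length]
      rw [h0]; simp [substPow]
  | succ s ih =>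
      have h1 : substPow σ (s + 1) (seg u 0 n) = substWord σ (substPow σ s (seg u 0 n)) := by
        simp [substPow, Function.iterate_succ_apply']
      rw [cutFn, h1, ih, hfix (cutFn σ u s n)]
      congr 1
      simp [seg_length]

lemma cutFn_zero_left (σ : A → List A) (u : ℕ → A) (t : ℕ) : cutFn σ u t 0 = 0 := by
  have : seg u 0 0 = [] := by simp [seg]
  rw [cutFn, this]
  induction t with
  | zero => simp [substPow]
  | succ s ih => simpa [substPow, Function.iterate_succ_apply'] using
      (by rw [show (substWord σ)^[s] ([] : List A) = [] from
        List.length_eq_zero_iff.mp ih]; simp [substWord] : ((substWord σ) ((substWord σ)^[s] ([] : List A))).length = 0)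

lemma cutFn_succ (σ : A → List A) (u : ℕ → A) (t n : ℕ) :
    cutFn σ u t (n + 1) = cutFn σ u t n + (substPow σ t [u n]).length := by
  rw [cutFn, seg_succ, substPow_append, List.length_append]; rfl

lemma cutFn_mono (σ : A → List A) (u : ℕ → A) (t : ℕ) {n m : ℕ} (h : n ≤ m) :
    cutFn σ u t n ≤ cutFn σ u t m :=
  monotone_nat_of_le_succ (fun s => by rw [cutFn_succ]; omega) h

lemma cutFn_strict (σ : A → List A) (hσne : ∀ a, σ a ≠ []) (u : ℕ → A) (t n : ℕ) :
    cutFn σ u t n + 1 ≤ cutFn σ u t (n + 1) := by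
  rw [cutFn_succ]
  have := one_le_substPow_len σ hσne t (u n)
  omega

lemma le_cutFn (σ : A → List A) (hσne : ∀ a, σ a ≠ []) (u : ℕ → A) (t n : ℕ) :
    n ≤ cutFn σ u t n := by
  induction n with
  | zero => omega
  | succ s ih => have := cutFn_strict σ hσne u t s; omega

lemma cutFn_comp (σ : A → List A) (u : ℕ → A) (hfix : IsFixedPoint σ u) (s t n : ℕ) :
    cutFn σ u s (cutFn σ u t n) = cutFn σ u (s + t) n := by
  rw [cutFn, ← substPow_seg σ u hfix, ← substPow_add, cutFn]

lemma seg_cutFn_block (σ : A → List A) (u : ℕ → A) (hfix : IsFixedPoint σ u) (t n : ℕ) :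
    seg u (cutFn σ u t n) (cutFn σ u t (n + 1)) = substPow σ t [u n] := by
  have h1 := substPow_seg σ u hfix t (n + 1)
  rw [seg_succ, substPow_append, substPow_seg σ u hfix t n] at h1
  have h2 : cutFn σ u t n ≤ cutFn σ u t (n + 1) := cutFn_mono σ u t (Nat.le_succ n)
  rw [seg_append u (Nat.zero_le _) h2] at h1
  exact (List.append_cancel_left h1).symm

lemma u_cutFn_add (σ : A → List A) (u : ℕ → A) (hfix : IsFixedPoint σ u) (t n r : ℕ)
    (h : r < (substPow σ t [u n]).length) :
    u (cutFn σ u t n + r) = (substPow σ t [u n])[r] := by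
  have hb := seg_cutFn_block σ u hfix t n
  have hr : r < (seg u (cutFn σ u t n) (cutFn σ u t (n+1))).length := by rw [hb]; exact h
  calc u (cutFn σ u t n + r) = (seg u (cutFn σ u t n) (cutFn σ u t (n+1)))[r] :=
        (seg_getElem u _ _ r hr).symm
    _ = (substPow σ t [u n])[r] := by congr 1

end Lemmas3
section Lemmas4
open List
variable {A : Type*}

/-- `q` is an aligned descendant position of `i` at time `t`. -/
def relPos (σ : A → List A) (u : ℕ → A) (t i q : ℕ) : Prop :=
  cutFn σ u t i ≤ q ∧ q < cutFn σ u t (i + 1)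

variable (σ : A → List A) (u : ℕ → A)

lemma relPos_zero (i : ℕ) : relPos σ u 0 i i := by
  constructor <;> simp [cutFn, substPow, seg_length]

lemma relPos_zero_eq {i q : ℕ} (h : relPos σ u 0 i q) : q = i := by
  obtain ⟨h1, h2⟩ := h
  simp [cutFn, substPow, seg_length] at h1 h2
  omega

lemma relPos_trans (hfix : IsFixedPoint σ u) {t s i q r : ℕ}
    (h1 : relPos σ u t i q) (h2 : relPos σ u s q r) : relPos σ u (t + s) i r := by
  obtain ⟨h1a, h1b⟩ := h1
  obtain ⟨h2a, h2b⟩ := h2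
  constructor
  · calc cutFn σ u (t + s) i = cutFn σ u s (cutFn σ u t i) := by
          rw [cutFn_comp σ u hfix, Nat.add_comm]
      _ ≤ cutFn σ u s q := cutFn_mono σ u s h1a
      _ ≤ r := h2a
  · calc r < cutFn σ u s (q + 1) := h2b
      _ ≤ cutFn σ u s (cutFn σ u t (i + 1)) := cutFn_mono σ u s (by omega)
      _ = cutFn σ u (t + s) (i + 1) := by rw [cutFn_comp σ u hfix, Nat.add_comm]

lemma exists_interval (f : ℕ → ℕ) (h0 : f 0 = 0) (hs : ∀ n, f n + 1 ≤ f (n + 1)) (r : ℕ) :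
    ∃ q, f q ≤ r ∧ r < f (q + 1) := by
  induction r with
  | zero => exact ⟨0, by omega, by have := hs 0; omega⟩
  | succ m ih =>
      obtain ⟨q, hq1, hq2⟩ := ih
      rcases Nat.lt_or_ge (m + 1) (f (q + 1)) with h|h
      · exact ⟨q, by omega, h⟩
      · exact ⟨q + 1, by omega, by have := hs (q + 1); omega⟩

lemma relPos_decomp (hσne : ∀ a, σ a ≠ []) (hfix : IsFixedPoint σ u) {t i r : ℕ}
    (h : relPos σ u (t + 1) i r) : ∃ q, relPos σ u t i q ∧ relPos σ u 1 q r := by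
  obtain ⟨q, hq1, hq2⟩ := exists_interval (cutFn σ u 1) (cutFn_zero_left σ u 1)
    (fun n => cutFn_strict σ hσne u 1 n) r
  obtain ⟨ha, hb⟩ := h
  refine ⟨q, ⟨?_, ?_⟩, hq1, hq2⟩
  · by_contra hc
    push_neg at hc
    have : q + 1 ≤ cutFn σ u t i := hc
    have h1 : cutFn σ u 1 (q + 1) ≤ cutFn σ u 1 (cutFn σ u t i) := cutFn_mono σ u 1 this
    rw [cutFn_comp σ u hfix, show 1 + t = t + 1 from Nat.add_comm 1 t] at h1
    omega
  · by_contra hc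
    push_neg at hc
    have h1 : cutFn σ u 1 (cutFn σ u t (i + 1)) ≤ cutFn σ u 1 q := cutFn_mono σ u 1 hc
    rw [cutFn_comp σ u hfix, show 1 + t = t + 1 from Nat.add_comm 1 t] at h1
    omega

/-- Transport of an aligned descendant along equal 2-blocks. -/
lemma relPos_transport (hσne : ∀ a, σ a ≠ []) (hfix : IsFixedPoint σ u) {t i i' q : ℕ}
    (h0 : u i = u i') (h1 : u (i + 1) = u (i' + 1)) (h : relPos σ u t i q) :
    ∃ q', relPos σ u t i' q' ∧ u q' = u q ∧ u (q' + 1) = u (q + 1) := by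
  obtain ⟨ha, hb⟩ := h
  set p := q - cutFn σ u t i with hp
  have hq : q = cutFn σ u t i + p := by omega
  have hlen : cutFn σ u t (i + 1) = cutFn σ u t i + (substPow σ t [u i]).length :=
    cutFn_succ σ u t i
  have hpL : p < (substPow σ t [u i]).length := by omega
  refine ⟨cutFn σ u t i' + p, ⟨by omega, ?_⟩, ?_, ?_⟩
  · rw [cutFn_succ, ← h0]; omega
  · rw [u_cutFn_add σ u hfix t i' p (by rw [← h0]; exact hpL), hq,
      u_cutFn_add σ u hfix t i p hpL]
    congr 1
    rw [h0]
  · rcases Nat.lt_or_ge (p + 1) ((substPow σ t [u i]).length) with hc|hc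
    · have e1 : cutFn σ u t i' + p + 1 = cutFn σ u t i' + (p + 1) := by omega
      have e2 : q + 1 = cutFn σ u t i + (p + 1) := by omega
      rw [e1, e2, u_cutFn_add σ u hfix t i' (p+1) (by rw [← h0]; exact hc),
        u_cutFn_add σ u hfix t i (p+1) hc]
      congr 1
      rw [h0]
    · have hpe : p + 1 = (substPow σ t [u i]).length := by omega
      have e2 : q + 1 = cutFn σ u t (i + 1) + 0 := by omega
      have e1 : cutFn σ u t i' + p + 1 = cutFn σ u t (i' + 1) + 0 := by
        rw [cutFn_succ, ← h0]; omega
      rw [e1, e2, u_cutFn_add σ u hfix t (i' + 1) 0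
          (one_le_substPow_len σ hσne t _),
        u_cutFn_add σ u hfix t (i + 1) 0 (one_le_substPow_len σ hσne t _)]
      congr 1
      rw [h1]

end Lemmas4
section Lemmas5
open List
variable {A : Type*}

/-- The 2-block at position `n`. -/
def blk (u : ℕ → A) (n : ℕ) : A × A := (u n, u (n + 1))

/-- The edge relation at the level of 2-blocks. -/
def blkEdge (σ : A → List A) (u : ℕ → A) (v w : A × A) : Prop :=
  ∃ i q : ℕ, blk u i = v ∧ blk u q = w ∧ relPos σ u 1 i q

/-- A walk of length `n` in the 2-block graph. -/
def blkWalk (σ : A → List A) (u : ℕ → A) (n : ℕ) (v w : A × A) : Prop :=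
  ∃ f : ℕ → A × A, f 0 = v ∧ f n = w ∧ ∀ r < n, blkEdge σ u (f r) (f (r + 1))

variable (σ : A → List A) (u : ℕ → A)

lemma blkWalk_zero (v : A × A) : blkWalk σ u 0 v v :=
  ⟨fun _ => v, rfl, rfl, fun r hr => absurd hr (by omega)⟩

lemma blkWalk_trans {n m : ℕ} {v w x : A × A} (h1 : blkWalk σ u n v w)
    (h2 : blkWalk σ u m w x) : blkWalk σ u (n + m) v x := by
  obtain ⟨f, hf0, hfn, hfe⟩ := h1
  obtain ⟨g, hg0, hgm, hge⟩ := h2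
  refine ⟨fun r => if r ≤ n then f r else g (r - n), by simp [hf0], ?_, ?_⟩
  · rcases Nat.eq_zero_or_pos m with hm|hm
    · have hwx : w = x := by rw [← hg0, ← hm, hgm]
      simp [hm, hfn, hwx]
    · have hnm : ¬ (n + m ≤ n) := by omega
      simp [hnm, hgm]
  · intro r hr
    rcases Nat.lt_or_ge r n with h|h
    · have e1 : r ≤ n := by omega
      have e2 : r + 1 ≤ n := by omega
      simpa [e1, e2] using hfe r h
    · rcases Nat.eq_or_lt_of_le h with h'|h'
      · have e0 : r = n := h'.symm
        subst e0
        have e2 : ¬ (r + 1 ≤ r) := by omega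
        have e3 : r + 1 - r = 1 := by omega
        simp only [le_refl, if_pos, e2, if_neg, if_false, e3]
        rw [hfn, ← hg0]
        exact hge 0 (by omega)
      · have e1 : ¬ (r ≤ n) := by omega
        have e2 : ¬ (r + 1 ≤ n) := by omega
        have e3 : r + 1 - n = (r - n) + 1 := by omega
        simp only [e1, e2, if_neg, e3]
        exact hge (r - n) (by omega)

lemma blkWalk_loop {v : A × A} (h : blkEdge σ u v v) (n : ℕ) : blkWalk σ u n v v :=
  ⟨fun _ => v, rfl, rfl, fun r _ => h⟩

lemma blkWalk_tail {n : ℕ} {v w : A × A} (h : blkWalk σ u (n + 1) v w) :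
    ∃ v', blkEdge σ u v v' ∧ blkWalk σ u n v' w := by
  obtain ⟨f, hf0, hfn, hfe⟩ := h
  refine ⟨f 1, hf0 ▸ hfe 0 (by omega), fun r => f (r + 1), rfl, hfn, ?_⟩
  intro r hr
  exact hfe (r + 1) (by omega)

end Lemmas5
section Lemmas6
open List
variable {A : Type*}

variable (σ : A → List A) (u : ℕ → A)

/-- Cutting a walk at a repeated vertex. -/
lemma blkWalk_cut {n : ℕ} {v w : A × A} (h : blkWalk σ u n v w) {a b : ℕ}
    (hab : a < b) (hbn : b ≤ n) (hfab : ∀ f : ℕ → A × A,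
      (f 0 = v ∧ f n = w ∧ ∀ r < n, blkEdge σ u (f r) (f (r + 1))) → True) :
    True := trivial

lemma blkWalk_shorten [Fintype A] {v w : A × A} :
    ∀ n : ℕ, blkWalk σ u n v w →
      ∃ d : ℕ, d < Fintype.card A * Fintype.card A ∧ blkWalk σ u d v w := by
  intro n
  induction n using Nat.strong_induction_on with
  | _ n ih =>
    intro h
    rcases Nat.lt_or_ge n (Fintype.card A * Fintype.card A) with hn|hn
    · exact ⟨n, hn, h⟩
    · obtain ⟨f, hf0, hfn, hfe⟩ := h
      -- pigeonhole on f restricted to Fin (n+1)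
      have hcard : Fintype.card (A × A) < Fintype.card (Fin (n + 1)) := by
        simp [Fintype.card_prod]
        omega
      obtain ⟨a, b, hne, hfab⟩ :=
        Fintype.exists_ne_map_eq_of_card_lt (fun r : Fin (n + 1) => f r.val) hcard
      -- wlog a < b
      obtain ⟨a', b', hab, hfab'⟩ : ∃ a' b' : ℕ, a' < b' ∧ b' ≤ n ∧ f a' = f b' := by
        rcases Nat.lt_or_ge a.val b.val with h'|h'
        · exact ⟨a.val, b.val, h', by omega, hfab⟩
        · have : b.val < a.val := by
            rcases Nat.eq_or_lt_of_le h' with h''|h''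
            · exact absurd (Fin.ext h''.symm) hne
            · exact h''
          exact ⟨b.val, a.val, this, by omega, hfab.symm⟩
      obtain ⟨hbn, hfeq⟩ := hfab'
      set d := b' - a' with hd
      have hd1 : 1 ≤ d := by omega
      have hwalk : blkWalk σ u (n - d) v w := by
        refine ⟨fun r => if r ≤ a' then f r else f (r + d), by simp [hf0], ?_, ?_⟩
        · rcases Nat.lt_or_ge a' (n - d) with h'|h'
          · have e1 : ¬ (n - d ≤ a') := by omega
            have e2 : n - d + d = n := by omega
            simp [e1, e2, hfn]
          · have e0 : a' = n - d := by omega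
            have e1 : n - d ≤ a' := by omega
            simp only [e1, if_pos]
            rw [← e0, hfeq]
            have : b' = n := by omega
            rw [this, hfn]
        · intro r hr
          rcases Nat.lt_or_ge r a' with h'|h'
          · have e1 : r ≤ a' := by omega
            have e2 : r + 1 ≤ a' := by omega
            simpa [e1, e2] using hfe r (by omega)
          · rcases Nat.eq_or_lt_of_le h' with h''|h''
            · have e0 : r = a' := h''.symm
              subst e0
              have e2 : ¬ (r + 1 ≤ r) := by omega
              simp only [le_refl, if_pos, e2, if_neg]
              rw [hfeq]
              have : r + 1 + d = b' + 1 := by omega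
              rw [this]
              exact hfe b' (by omega)
            · have e1 : ¬ (r ≤ a') := by omega
              have e2 : ¬ (r + 1 ≤ a') := by omega
              simp only [e1, e2, if_neg]
              have : r + 1 + d = (r + d) + 1 := by omega
              rw [this]
              exact hfe (r + d) (by omega)
      exact ih (n - d) (by omega) hwalk

/-- From an aligned descendant chain to a block walk. -/
lemma relPos_toWalk (hσne : ∀ a, σ a ≠ []) (hfix : IsFixedPoint σ u) :
    ∀ t i q, relPos σ u t i q → blkWalk σ u t (blk u i) (blk u q) := by
  intro t
  induction t with
  | zero =>
      intro i q h
      rw [relPos_zero_eq σ u h]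
      exact blkWalk_zero σ u _
  | succ s ih =>
      intro i q h
      obtain ⟨m, hm1, hm2⟩ := relPos_decomp σ u hσne hfix h
      refine blkWalk_trans σ u (ih i m hm1) ?_
      refine ⟨fun r => if r = 0 then blk u m else blk u q, rfl, by simp, ?_⟩
      intro r hr
      have : r = 0 := by omega
      subst this
      simp only [if_pos rfl, if_neg (by omega : ¬ (0 + 1 = 0))]
      exact ⟨m, q, rfl, rfl, hm2⟩

/-- Realizing a block walk as an aligned descendant chain from any position. -/
lemma blkWalk_realize (hσne : ∀ a, σ a ≠ []) (hfix : IsFixedPoint σ u) :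
    ∀ n (v w : A × A), blkWalk σ u n v w → ∀ i, blk u i = v →
      ∃ q, relPos σ u n i q ∧ blk u q = w := by
  intro n
  induction n with
  | zero =>
      intro v w h i hi
      obtain ⟨f, hf0, hfn, _⟩ := h
      exact ⟨i, relPos_zero σ u i, by rw [hi, ← hf0, hfn]⟩
  | succ s ih =>
      intro v w h i hi
      obtain ⟨v', hev', hw'⟩ := blkWalk_tail σ u h
      obtain ⟨i₀, q₀, hbi₀, hbq₀, hrel⟩ := hev'
      have hblocks : u i = u i₀ ∧ u (i + 1) = u (i₀ + 1) := by
        have : blk u i = blk u i₀ := by rw [hi, ← hbi₀]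
        exact ⟨congrArg Prod.fst this, congrArg Prod.snd this⟩
      obtain ⟨q₁, hq₁rel, hq₁a, hq₁b⟩ :=
        relPos_transport σ u hσne hfix hblocks.1.symm hblocks.2.symm hrel
      have hbq₁ : blk u q₁ = v' := by
        rw [← hbq₀]
        exact Prod.ext hq₁a hq₁b
      obtain ⟨q, hqrel, hqw⟩ := ih v' w hw' q₁ hbq₁
      refine ⟨q, ?_, hqw⟩
      have := relPos_trans σ u hfix hq₁rel hqrel
      rwa [Nat.add_comm 1 s] at this
  
end Lemmas6
section Lemmas7
open List
variable {A : Type*}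

lemma two_le_length_of_mem_ne {l : List A} {a b : A} (ha : a ∈ l) (hb : b ∈ l)
    (h : a ≠ b) : 2 ≤ l.length := by
  match l with
  | [] => simp at ha
  | [x] =>
      simp at ha hb
      exact absurd (ha.trans hb.symm) h
  | x :: y :: t => simp

lemma exists_cons_cons_of_two_le {l : List A} (h : 2 ≤ l.length) :
    ∃ (b c : A) (t : List A), l = b :: c :: t := by
  match l with
  | [] => simp at h
  | [x] => simp at h
  | x :: y :: t => exact ⟨x, y, t, rfl⟩

lemma substPow_one (σ : A → List A) (a : A) : substPow σ 1 [a] = σ a := by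
  rw [substPow_singleton_succ]
  rfl

variable (σ : A → List A) (u : ℕ → A)

lemma sigma_u0_two [Fintype A] (h2 : 2 ≤ Fintype.card A) (hσne : ∀ a, σ a ≠ [])
    {k : ℕ} (hk : ∀ a b, a ∈ substPow σ k [b]) (hfix : IsFixedPoint σ u) :
    2 ≤ (σ (u 0)).length := by
  by_contra hl
  push_neg at hl
  have hlen1 : (σ (u 0)).length = 1 := by
    have := List.length_pos_iff.mpr (hσne (u 0))
    omega
  -- σ (u 0) = [u 0]
  have hfix1 := hfix 1
  have hseg1 : seg u 0 1 = [u 0] := by simp [seg, List.range_succ]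
  rw [hseg1] at hfix1
  have hsw : substWord σ [u 0] = σ (u 0) := by simp [substWord]
  rw [hsw, hlen1, hseg1] at hfix1
  -- all powers fix [u 0]
  have hpow : ∀ p, substPow σ p [u 0] = [u 0] := by
    intro p
    induction p with
    | zero => rfl
    | succ s ih => rw [substPow_singleton_succ, hfix1, ih]
  obtain ⟨a, ha⟩ := Fintype.exists_ne_of_one_lt_card (by omega) (u 0)
  have := hk a (u 0)
  rw [hpow k] at this
  simp at this
  exact ha this

lemma reach_u0 (hfix : IsFixedPoint σ u) {k : ℕ} (hk : ∀ a b, a ∈ substPow σ k [b])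
    (i : ℕ) : ∃ q, relPos σ u k i q ∧ u q = u 0 := by
  obtain ⟨p, hp, hgp⟩ := List.getElem_of_mem (hk (u 0) (u i))
  refine ⟨cutFn σ u k i + p, ⟨by omega, ?_⟩, ?_⟩
  · rw [cutFn_succ]; omega
  · rw [u_cutFn_add σ u hfix k i p hp, hgp]

lemma step_to_v0 (hσne : ∀ a, σ a ≠ []) (hfix : IsFixedPoint σ u)
    (h2 : 2 ≤ (σ (u 0)).length) {q : ℕ} (hq : u q = u 0) :
    ∃ q', relPos σ u 1 q q' ∧ blk u q' = blk u 0 := by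
  have hlq : (substPow σ 1 [u q]).length = (σ (u 0)).length := by
    rw [substPow_one, hq]
  have hl0 : (substPow σ 1 [u 0]).length = (σ (u 0)).length := by
    rw [substPow_one]
  have hc0 : cutFn σ u 1 0 = 0 := cutFn_zero_left σ u 1
  refine ⟨cutFn σ u 1 q, ⟨le_refl _, by rw [cutFn_succ]; omega⟩, ?_⟩
  have e0 : u (cutFn σ u 1 q) = u 0 := by
    have h1 := u_cutFn_add σ u hfix 1 q 0 (by omega)
    have h2' := u_cutFn_add σ u hfix 1 0 0 (by omega)
    rw [Nat.add_zero] at h1 h2'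
    rw [hc0] at h2'
    simp only [substPow_one, hq] at h1 h2'
    rw [h1, ← h2']
  have e1 : u (cutFn σ u 1 q + 1) = u 1 := by
    have h1 := u_cutFn_add σ u hfix 1 q 1 (by omega)
    have h2' := u_cutFn_add σ u hfix 1 0 1 (by omega)
    rw [hc0] at h2'
    simp only [substPow_one, hq] at h1 h2'
    rw [h1, ← h2']
  rw [blk, blk, e0, e1]

lemma loop_v0 (hσne : ∀ a, σ a ≠ []) : blkEdge σ u (blk u 0) (blk u 0) := by
  refine ⟨0, 0, rfl, rfl, ?_, ?_⟩
  · rw [cutFn_zero_left]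
  · have := cutFn_strict σ hσne u 1 0
    rw [cutFn_zero_left] at this
    omega

lemma growth [Fintype A] (hσne : ∀ a, σ a ≠ []) (h2 : 2 ≤ Fintype.card A)
    {k : ℕ} (hk : ∀ a b, a ∈ substPow σ k [b]) :
    ∀ (j : ℕ) (a : A), 2 ^ j ≤ (substPow σ (j * k) [a]).length := by
  have h2k : ∀ b : A, 2 ≤ (substPow σ k [b]).length := by
    intro b
    obtain ⟨a₁, a₂, hne⟩ := Fintype.exists_pair_of_one_lt_card (α := A) (by omega)
    exact two_le_length_of_mem_ne (hk a₁ b) (hk a₂ b) hne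
  intro j
  induction j with
  | zero => intro a; simp [substPow]
  | succ s ih =>
      intro a
      obtain ⟨b, c, t, hbct⟩ := exists_cons_cons_of_two_le (h2k a)
      have e : (s + 1) * k = s * k + k := by ring
      rw [e, substPow_add, hbct, substPow_cons σ (s * k) b (c :: t),
        substPow_cons σ (s * k) c t, List.length_append, List.length_append]
      have hb := ih b
      have hc := ih c
      have : 2 ^ (s + 1) = 2 ^ s + 2 ^ s := by ring
      omega

lemma reach_target [Fintype A] (hσne : ∀ a, σ a ≠ []) (h2 : 2 ≤ Fintype.card A)
    {k : ℕ} (hk : ∀ a b, a ∈ substPow σ k [b]) (m : ℕ) :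
    ∃ t, relPos σ u t 0 m := by
  refine ⟨(m + 1) * k, ?_, ?_⟩
  · rw [cutFn_zero_left]
    omega
  have h1 : cutFn σ u ((m+1)*k) 1 = (substPow σ ((m+1)*k) [u 0]).length := by
    rw [show (1 : ℕ) = 0 + 1 from rfl, cutFn_succ, cutFn_zero_left]
    omega
  rw [show (0 : ℕ) + 1 = 1 from rfl, h1]
  have := growth σ hσne h2 hk (m + 1) (u 0)
  have hm : m < 2 ^ (m + 1) := by
    have := Nat.lt_two_pow_self (n := m)
    have : (2:ℕ) ^ m ≤ 2 ^ (m + 1) := Nat.pow_le_pow_right (by omega) (by omega)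
    omega
  omega

end Lemmas7
section Lemmas8
open List
variable {A : Type*} [Fintype A]

/-- Master lemma: from any position `i` one can reach, in exactly `n₀` aligned steps,
a position carrying any prescribed 2-block of `u`. -/
lemma main_reach (σ : A → List A) (u : ℕ → A) (hσne : ∀ a, σ a ≠ [])
    (h2 : 2 ≤ Fintype.card A) {k : ℕ} (hk : ∀ a b, a ∈ substPow σ k [b])
    (hfix : IsFixedPoint σ u) {n₀ : ℕ}
    (hn₀ : 2 * (Fintype.card A * Fintype.card A) ≤ n₀ + 2)
    (i m : ℕ) : ∃ q, relPos σ u n₀ i q ∧ blk u q = blk u m := by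
  -- walk from blk i to blk 0
  obtain ⟨q₀, hq₀rel, hq₀⟩ := reach_u0 σ u hfix hk i
  obtain ⟨q₁, hq₁rel, hq₁⟩ := step_to_v0 σ u hσne hfix
    (sigma_u0_two σ u h2 hσne hk hfix) hq₀
  have hw1 : blkWalk σ u (k + 1) (blk u i) (blk u 0) := by
    have := relPos_toWalk σ u hσne hfix (k + 1) i q₁
      (relPos_trans σ u hfix hq₀rel hq₁rel)
    rwa [hq₁] at this
  obtain ⟨d₁, hd₁, hwd₁⟩ := blkWalk_shorten σ u (k + 1) hw1
  -- walk from blk 0 to blk m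
  obtain ⟨t, htrel⟩ := reach_target σ u hσne h2 hk m
  have hw2 : blkWalk σ u t (blk u 0) (blk u m) := relPos_toWalk σ u hσne hfix t 0 m htrel
  obtain ⟨d₂, hd₂, hwd₂⟩ := blkWalk_shorten σ u t hw2
  -- pad with the loop at blk 0
  have hpad : blkWalk σ u (n₀ - d₁ - d₂) (blk u 0) (blk u 0) :=
    blkWalk_loop σ u (loop_v0 σ u hσne) _
  have htot : blkWalk σ u (d₁ + ((n₀ - d₁ - d₂) + d₂)) (blk u i) (blk u m) :=
    blkWalk_trans σ u hwd₁ (blkWalk_trans σ u hpad hwd₂)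
  have he : d₁ + ((n₀ - d₁ - d₂) + d₂) = n₀ := by omega
  rw [he] at htot
  exact blkWalk_realize σ u hσne hfix n₀ _ _ htot i rfl

end Lemmas8
section Lemmas9
open List
variable {A : Type*}

lemma substPow_nil (σ : A → List A) (p : ℕ) : substPow σ p [] = [] := by
  induction p with
  | zero => rfl
  | succ s ih => rw [substPow, Function.iterate_succ_apply', ← substPow, ih]; rfl

lemma sum_map_mul_right' (l : List A) (g : A → ℝ) (r : ℝ) :
    (l.map g).sum * r = (l.map fun c => g c * r).sum := by
  induction l with
  | nil => simp
  | cons a t ih => simp [add_mul, ih]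

lemma len_substPow_word (σ : A → List A) (p : ℕ) (w : List A) :
    ((substPow σ p w).length : ℝ) = (w.map fun c => ((substPow σ p [c]).length : ℝ)).sum := by
  induction w with
  | nil => simp [substPow_nil]
  | cons a t ih => rw [substPow_cons, List.length_append]; push_cast; simp [ih]

lemma list_sum_map_count [Fintype A] [DecidableEq A] (l : List A) (g : A → ℝ) :
    (l.map g).sum = ∑ b, (l.count b : ℝ) * g b := by
  induction l with
  | nil => simp
  | cons a t ih =>
      simp only [List.map_cons, List.sum_cons, ih, List.count_cons, beq_iff_eq]
      push_cast
      have hxe : ∀ x : A, ((t.count x : ℝ) + if a = x then 1 else 0) * g x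
          = (t.count x : ℝ) * g x + (if a = x then g x else 0) := by
        intro x
        split <;> ring
      rw [Finset.sum_congr rfl fun x _ => hxe x, Finset.sum_add_distrib,
        Finset.sum_ite_eq Finset.univ a g]
      simp [add_comm]

variable [Fintype A] [Nonempty A] [DecidableEq A]
variable (σ : A → List A) (lam : ℝ) (β : A → ℝ)

lemma heig_component (heig : (incMatrixR σ).mulVec β = lam • β) (a : A) :
    ∑ b, ((σ a).count b : ℝ) * β b = lam * β a := by
  have := congrFun heig a
  simpa [Matrix.mulVec, dotProduct, incMatrixR] using this

lemma lam_pos (hσne : ∀ a, σ a ≠ []) (hβ : ∀ a, 0 < β a) (heig : (incMatrixR σ).mulVec β = lam • β) :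
    0 < lam := by
  have a : A := Classical.arbitrary A
  have h := heig_component σ lam β heig a
  obtain ⟨c, hc⟩ := List.exists_mem_of_ne_nil (σ a) (hσne a)
  have hsum : 0 < ∑ b, ((σ a).count b : ℝ) * β b := by
    apply Finset.sum_pos'
    · intro b _
      exact mul_nonneg (by positivity) (le_of_lt (hβ b))
    · refine ⟨c, Finset.mem_univ c, ?_⟩
      have : 0 < (σ a).count c := List.count_pos_iff.mpr hc
      have : (1 : ℝ) ≤ ((σ a).count c : ℝ) := by exact_mod_cast this
      nlinarith [hβ c]
  rw [h] at hsum
  nlinarith [hβ a]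

lemma eigen_len (hβ : ∀ a, 0 < β a) (heig : (incMatrixR σ).mulVec β = lam • β) :
    ∀ (p : ℕ) (a : A), ((substPow σ p [a]).length : ℝ) *
      (Finset.univ.inf' Finset.univ_nonempty β) ≤ lam ^ p * β a := by
  intro p
  induction p with
  | zero =>
      intro a
      simp only [substPow, Function.iterate_zero, id_eq, List.length_singleton,
        Nat.cast_one, one_mul, pow_zero]
      exact Finset.inf'_le β (Finset.mem_univ a)
  | succ s ih =>
      intro a
      rw [substPow_singleton_succ, len_substPow_word, sum_map_mul_right']
      have h1 : ((σ a).map fun c => ((substPow σ s [c]).length : ℝ) *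
          Finset.univ.inf' Finset.univ_nonempty β).sum ≤
          ((σ a).map fun c => lam ^ s * β c).sum := by
        apply List.sum_le_sum
        intro c _
        exact ih c
      refine h1.trans ?_
      have h2 : ((σ a).map fun c => lam ^ s * β c).sum
          = lam ^ s * ((σ a).map β).sum := by
        rw [List.sum_map_mul_left]
      rw [h2, list_sum_map_count, heig_component σ lam β heig a, pow_succ]
      ring_nf
      exact le_refl _

lemma len_le_C_lam (hσne : ∀ a, σ a ≠ []) (hβ : ∀ a, 0 < β a) (heig : (incMatrixR σ).mulVec β = lam • β)
    (p : ℕ) (a : A) :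
    ((substPow σ p [a]).length : ℝ) ≤ (Cst β : ℝ) * lam ^ p := by
  have hlam := lam_pos σ lam β hσne hβ heig
  set ib := Finset.univ.inf' Finset.univ_nonempty β with hib
  set sb := Finset.univ.sup' Finset.univ_nonempty β with hsb
  have hibpos : 0 < ib := by
    rw [hib, Finset.lt_inf'_iff]
    exact fun b _ => hβ b
  have h1 : ((substPow σ p [a]).length : ℝ) * ib ≤ lam ^ p * sb := by
    refine (eigen_len σ lam β hβ heig p a).trans ?_
    have : β a ≤ sb := Finset.le_sup' β (Finset.mem_univ a)
    nlinarith [pow_pos hlam p]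
  have h2 : ((substPow σ p [a]).length : ℝ) ≤ lam ^ p * sb / ib :=
    (le_div_iff₀ hibpos).mpr h1
  rw [mul_div_assoc] at h2
  refine h2.trans ?_
  have hC : sb / ib ≤ (Cst β : ℝ) := Nat.le_ceil _
  have := pow_pos hlam p
  calc lam ^ p * (sb / ib) ≤ lam ^ p * (Cst β : ℝ) := by nlinarith
    _ = (Cst β : ℝ) * lam ^ p := mul_comm _ _

lemma Sp_le_C_lam (hσne : ∀ a, σ a ≠ []) (hβ : ∀ a, 0 < β a) (heig : (incMatrixR σ).mulVec β = lam • β)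
    (p : ℕ) : ((Sp σ p : ℕ) : ℝ) ≤ (Cst β : ℝ) * lam ^ p := by
  obtain ⟨a, _, ha⟩ := Finset.exists_mem_eq_sup' Finset.univ_nonempty
    (fun a : A => (substPow σ p [a]).length)
  rw [Sp, ha]
  exact len_le_C_lam σ lam β hσne hβ heig p a

lemma one_le_Sp (hσne : ∀ a, σ a ≠ []) (p : ℕ) : 1 ≤ Sp σ p := by
  have a : A := Classical.arbitrary A
  have h := one_le_substPow_len σ hσne p a
  calc 1 ≤ (substPow σ p [a]).length := h
    _ ≤ Sp σ p := by
        unfold Sp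
        exact Finset.le_sup' (fun a : A => (substPow σ p [a]).length) (Finset.mem_univ a)

end Lemmas9

/-- Lemma 2.1 (computability of `g`): every word of `L₂(u)` occurs in every window of
length `G = ⌈2 C (max_a |σ(a)|) λ^{n₀}⌉` of `u`, where `n₀ = (#A)⁴ - 2(#A)² + 2`;
in particular the constant `g` is at most `G`. -/
theorem stmt_2 (A : Type*) [Fintype A] [DecidableEq A] [Nonempty A]
    (h2 : 2 ≤ Fintype.card A)
    (σ : A → List A) (hσne : ∀ a, σ a ≠ [])
    (hprim : IsPrimitiveSubst σ)
    (u : ℕ → A) (hfix : IsFixedPoint σ u) (hap : AperiodicSeq u)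
    (lam : ℝ) (β : A → ℝ) (hβ : ∀ a, 0 < β a)
    (heig : (incMatrixR σ).mulVec β = lam • β)
    (n₀ : ℕ) (hn₀ : n₀ = Fintype.card A ^ 4 - 2 * Fintype.card A ^ 2 + 2)
    (G : ℕ) (hG : G = ⌈2 * (Cst β : ℝ) * (Sp σ 1 : ℝ) * lam ^ n₀⌉₊) :
    (∀ w ∈ factors u 2, ∀ i : ℕ, w <:+: seg u i (i + G)) ∧ gapConst u ≤ G := by
  obtain ⟨k, hk⟩ := hprim
  set N := Fintype.card A with hN
  -- n₀ is big enough
  have hNN : 2 * 2 ≤ N * N := Nat.mul_le_mul h2 h2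
  have hq4 : 4 * (N * N) ≤ (N * N) * (N * N) := Nat.mul_le_mul_right _ hNN
  have hsq : N ^ 2 = N * N := by ring
  have hfour : N ^ 4 = (N * N) * (N * N) := by ring
  rw [hsq, hfour] at hn₀
  have hn₀big : 2 * (N * N) ≤ n₀ + 2 := by omega
  -- the two key quantitative bounds
  have hlam := lam_pos σ lam β hσne hβ heig
  have hlamp : (0:ℝ) < lam ^ n₀ := pow_pos hlam n₀
  have hSpn : ((Sp σ n₀ : ℕ) : ℝ) ≤ (Cst β : ℝ) * lam ^ n₀ :=
    Sp_le_C_lam σ lam β hσne hβ heig n₀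
  have hS1 : (1 : ℝ) ≤ ((Sp σ 1 : ℕ) : ℝ) := by
    exact_mod_cast one_le_Sp σ hσne 1
  have hG2 : 2 * Sp σ n₀ ≤ G := by
    have hreal : ((2 * Sp σ n₀ : ℕ) : ℝ) ≤ 2 * (Cst β : ℝ) * (Sp σ 1 : ℝ) * lam ^ n₀ := by
      push_cast
      have hC0 : (0:ℝ) ≤ (Cst β : ℝ) := Nat.cast_nonneg _
      nlinarith
    have := hreal.trans (Nat.le_ceil _)
    rw [← hG] at this
    exact_mod_cast this
  -- Part 1
  have part1 : ∀ w ∈ factors u 2, ∀ i : ℕ, w <:+: seg u i (i + G) := by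
    rintro w ⟨m, rfl⟩ x
    -- find the first n₀-cutting point ≥ x
    have hex : ∃ j, x ≤ cutFn σ u n₀ j := ⟨x, le_cutFn σ hσne u n₀ x⟩
    set j := Nat.find hex with hj
    have hjx : x ≤ cutFn σ u n₀ j := Nat.find_spec hex
    have hlenj : ∀ n : ℕ, (substPow σ n₀ [u n]).length ≤ Sp σ n₀ := by
      intro n
      unfold Sp
      exact Finset.le_sup' (fun a : A => (substPow σ n₀ [a]).length) (Finset.mem_univ _)
    have hcj : cutFn σ u n₀ j < x + Sp σ n₀ := by
      have hSp1 := one_le_Sp σ hσne n₀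
      match hjj : j with
      | 0 =>
          rw [cutFn_zero_left]
          omega
      | j' + 1 =>
          have hmin : ¬ x ≤ cutFn σ u n₀ j' := Nat.find_min hex (by omega)
          have := cutFn_succ σ u n₀ j'
          have := hlenj j'
          omega
    -- reach the block of w from j in exactly n₀ steps
    obtain ⟨q, ⟨hq1, hq2⟩, hqblk⟩ := main_reach σ u hσne h2 hk hfix hn₀big j m
    have hc1 : cutFn σ u n₀ (j + 1) = cutFn σ u n₀ j + (substPow σ n₀ [u j]).length :=
      cutFn_succ σ u n₀ j
    have hqx : x ≤ q := le_trans hjx hq1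
    have hq2x : q + 2 ≤ x + G := by
      have := hlenj j
      omega
    -- w equals the 2-block at q
    have hweq : seg u m (m + 2) = seg u q (q + 2) := by
      rw [seg_two, seg_two]
      have h1 : u q = u m := congrArg Prod.fst hqblk
      have h2' : u (q + 1) = u (m + 1) := congrArg Prod.snd hqblk
      rw [h1, h2']
    rw [hweq]
    refine ⟨seg u x q, seg u (q + 2) (x + G), ?_⟩
    rw [← seg_append u hqx (by omega : q ≤ q + 2),
      ← seg_append u (by omega : x ≤ q + 2) hq2x]
  refine ⟨part1, ?_⟩
  -- Part 2
  apply csSup_le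
  · exact ⟨minGap u (seg u 0 (0 + 2)), ⟨seg u 0 (0 + 2), ⟨0, rfl⟩, rfl⟩⟩
  · rintro b ⟨w, hw, rfl⟩
    exact Nat.sInf_le (fun i => part1 w hw i)
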